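/- arXiv:2302.07987 — 3 statements merged into one kernel-verified Lean document; each statement's English description precedes it below -/
import Mathlib

section
/- Let N ≥ 1 and let v be a prime with v ∤ N. Let γ_v = [[1,0],[0,v]] ∈ GL₂(ℚ). If z ∈ ℙ¹(ℚ) satisfies γ_v · z ∈ Γ₀(N)·∞, then z ∈ Γ₀(N)·∞. In other words, the matrix γ_v stabilizes the set C = ℙ¹(ℚ) − Γ₀(N)·∞. -/
open Matrix CongruenceSubgroup

abbrev SL2Z := Matrix.SpecialLinearGroup (Fin 2) ℤ
abbrev P1 := Projectivization ℚ (Fin 2 → ℚ)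

noncomputable def glAct (g : GL (Fin 2) ℚ) (x : P1) : P1 :=
  Projectivization.map
    ((Matrix.toLinearEquiv' (g : Matrix (Fin 2) (Fin 2) ℚ) g.invertible).toLinearMap)
    (LinearEquiv.injective _) x

noncomputable def slAct (g : SL2Z) : P1 → P1 :=
  glAct (Matrix.SpecialLinearGroup.toGL
    (Matrix.SpecialLinearGroup.map (Int.castRingHom ℚ) g))

noncomputable def inf : P1 := Projectivization.mk ℚ ![1, 0] (by intro h; simpa using congrFun h 0)

noncomputable def ratPt (q : ℚ) : P1 :=
  Projectivization.mk ℚ ![q, 1] (by intro h; simpa using congrFun h 1)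

def orbitInf (N : ℕ) : Set P1 := {x | ∃ γ ∈ Gamma0 N, slAct γ inf = x}

lemma glAct_mk (g : GL (Fin 2) ℚ) (w : Fin 2 → ℚ) (hw : w ≠ 0) :
    glAct g (Projectivization.mk ℚ w hw)
      = Projectivization.mk ℚ ((g : Matrix (Fin 2) (Fin 2) ℚ).mulVec w)
        (by
          intro h
          apply hw
          have := (Matrix.toLinearEquiv' (g : Matrix (Fin 2) (Fin 2) ℚ) g.invertible).injective
            (a₁ := w) (a₂ := 0)
          simp only [map_zero] at this
          apply this
          simpa [Matrix.toLinearEquiv', Matrix.GeneralLinearGroup.coe_toLin] using h) := by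
  unfold glAct
  rw [Projectivization.map_mk]
  rfl

lemma vec_ne_zero (a c : ℤ) (h : IsCoprime a c) : ![(a : ℚ), (c : ℚ)] ≠ 0 := by
  intro hz
  have h0 : (a : ℚ) = 0 := congrFun hz 0
  have h1 : (c : ℚ) = 0 := congrFun hz 1
  rw [Int.cast_eq_zero] at h0 h1
  subst h0; subst h1
  exact not_isCoprime_zero_zero h

lemma mem_orbit (N : ℕ) (a c : ℤ) (hco : IsCoprime a c) (hdvd : (N : ℤ) ∣ c) :
    Projectivization.mk ℚ ![(a : ℚ), (c : ℚ)] (vec_ne_zero a c hco) ∈ orbitInf N := by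
  obtain ⟨u, w, huv⟩ := hco
  refine ⟨⟨!![a, -w; c, u], by simp [Matrix.det_fin_two_of]; linarith⟩, ?_, ?_⟩
  · apply Gamma0_mem.2
    simpa using (ZMod.intCast_zmod_eq_zero_iff_dvd c N).2 hdvd
  · show glAct _ inf = _
    unfold inf
    rw [glAct_mk]
    congr 1
    funext i
    fin_cases i <;>
      simp [Matrix.SpecialLinearGroup.toGL, Matrix.mulVec, dotProduct,
        Fin.sum_univ_two, Matrix.SpecialLinearGroup.map_apply_coe, RingHom.mapMatrix_apply, Matrix.map_apply] <;> rfl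

lemma orbit_char (N : ℕ) (x : P1) (hx : x ∈ orbitInf N) :
    ∃ (a c : ℤ) (h : IsCoprime a c), (N : ℤ) ∣ c ∧
      x = Projectivization.mk ℚ ![(a : ℚ), (c : ℚ)] (vec_ne_zero a c h) := by
  obtain ⟨γ, hγ, hγx⟩ := hx
  set a : ℤ := (γ : Matrix (Fin 2) (Fin 2) ℤ) 0 0
  set c : ℤ := (γ : Matrix (Fin 2) (Fin 2) ℤ) 1 0
  have hdet : a * (γ : Matrix (Fin 2) (Fin 2) ℤ) 1 1 - (γ : Matrix (Fin 2) (Fin 2) ℤ) 0 1 * c = 1 := by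
    have := γ.2
    rw [Matrix.det_fin_two] at this
    linarith
  have hco : IsCoprime a c := ⟨(γ : Matrix (Fin 2) (Fin 2) ℤ) 1 1, -((γ : Matrix (Fin 2) (Fin 2) ℤ) 0 1), by linarith⟩
  refine ⟨a, c, hco, ?_, ?_⟩
  · exact (ZMod.intCast_zmod_eq_zero_iff_dvd c N).1 (by exact_mod_cast Gamma0_mem.1 hγ)
  · rw [← hγx]
    show glAct _ inf = _
    unfold inf
    rw [glAct_mk]
    congr 1
    funext i
    fin_cases i <;>
      simp [Matrix.SpecialLinearGroup.toGL, Matrix.mulVec, dotProduct,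
        Fin.sum_univ_two, Matrix.SpecialLinearGroup.map_apply_coe, RingHom.mapMatrix_apply, Matrix.map_apply, a, c]

/-- every point has a coprime integer representative -/
lemma exists_rep (z : P1) : ∃ (a c : ℤ) (h : IsCoprime a c),
    z = Projectivization.mk ℚ ![(a : ℚ), (c : ℚ)] (vec_ne_zero a c h) := by
  set w := z.rep with hw
  have hwz : w ≠ 0 := z.rep_nonzero
  by_cases h1 : w 1 = 0
  · refine ⟨1, 0, isCoprime_one_left, ?_⟩
    have hw0 : w 0 ≠ 0 := by
      intro h0
      apply hwz
      funext i; fin_cases i <;> assumption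
    rw [← z.mk_rep, Projectivization.mk_eq_mk_iff']
    refine ⟨w 0, ?_⟩
    funext i; fin_cases i <;> simp [← hw, h1]
  · set q : ℚ := w 0 / w 1 with hq
    have hden : (q.den : ℚ) ≠ 0 := by exact_mod_cast q.den_ne_zero
    refine ⟨q.num, q.den, ?_, ?_⟩
    · rw [Int.isCoprime_iff_gcd_eq_one]
      exact q.reduced
    · rw [← z.mk_rep, Projectivization.mk_eq_mk_iff']
      refine ⟨w 1 / (q.den : ℚ), ?_⟩
      have hnum : (q.num : ℚ) = q * q.den := by
        rw [eq_comm, mul_comm]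
        exact_mod_cast Rat.den_mul_eq_num q
      funext i
      fin_cases i <;> simp only [← hw, Pi.smul_apply, Fin.zero_eta, Fin.mk_one, Matrix.cons_val_zero, Matrix.cons_val_one,
        Matrix.head_cons, smul_eq_mul]
      · rw [hnum, hq]
        field_simp
      · field_simp; simp

/-- γ_v = [[1,0],[0,v]] with v prime, v ∤ N, stabilizes
C = ℙ¹(ℚ) − Γ₀(N)·∞: if γ_v·z ∈ Γ₀(N)·∞ then z ∈ Γ₀(N)·∞. -/
theorem stmt3 (N : ℕ) (hN : 1 ≤ N) (v : ℕ) (hv : v.Prime) (hvN : ¬ v ∣ N) (z : P1)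
    (h : glAct (Matrix.GeneralLinearGroup.mkOfDetNeZero !![(1 : ℚ), 0; 0, (v : ℚ)]
      (by
        rw [Matrix.det_fin_two_of]
        simpa using (Nat.cast_ne_zero (R := ℚ)).mpr hv.ne_zero)) z ∈ orbitInf N) :
    z ∈ orbitInf N := by
  obtain ⟨a, c, hco, hz⟩ := exists_rep z
  -- compute the action
  have hvQ : ((v : ℚ)) ≠ 0 := by exact_mod_cast hv.ne_zero
  -- γ_v z = mk ![a, v*c]
  have hact : glAct (Matrix.GeneralLinearGroup.mkOfDetNeZero !![(1 : ℚ), 0; 0, (v : ℚ)]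
      (by rw [Matrix.det_fin_two_of]; simpa using (Nat.cast_ne_zero (R := ℚ)).mpr hv.ne_zero)) z
      = Projectivization.mk ℚ ![(a : ℚ), ((v : ℤ) * c : ℤ)]
          (by
            intro hh
            have h0 : (a : ℚ) = 0 := by simpa using congrFun hh 0
            have h1 : ((v * c : ℤ) : ℚ) = 0 := by simpa using congrFun hh 1
            rw [Int.cast_eq_zero] at h0
            rw [Int.cast_eq_zero, mul_eq_zero] at h1
            rcases h1 with h1 | h1
            · exact (by exact_mod_cast hv.ne_zero : (v:ℤ) ≠ 0) h1
            · subst h0 h1; exact not_isCoprime_zero_zero hco) := by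
    conv_lhs => rw [hz]
    rw [glAct_mk, Projectivization.mk_eq_mk_iff']
    refine ⟨1, ?_⟩
    funext i
    fin_cases i <;>
      simp [Matrix.GeneralLinearGroup.mkOfDetNeZero, Matrix.GeneralLinearGroup.mk',
        Matrix.unitOfDetInvertible, Matrix.mulVec, dotProduct,
        Fin.sum_univ_two, mul_comm]
  rw [hact] at h
  -- use orbit characterization
  obtain ⟨a', c', hco', hdvd', heq⟩ := orbit_char N _ h
  -- common: if mk ![A,C] = mk ![a',c'] with both coprime, then c' ∣ C
  have key : ∀ (A C : ℤ) (hAC : IsCoprime A C),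
      Projectivization.mk ℚ ![(A : ℚ), (C : ℚ)] (vec_ne_zero A C hAC)
        = Projectivization.mk ℚ ![(a' : ℚ), (c' : ℚ)] (vec_ne_zero a' c' hco') →
      (N : ℤ) ∣ C := by
    intro A C hAC hmk
    rw [Projectivization.mk_eq_mk_iff'] at hmk
    obtain ⟨t, ht⟩ := hmk
    have ht0 : (A : ℚ) = t * a' := by simpa using (congrFun ht 0).symm
    have ht1 : (C : ℚ) = t * c' := by simpa using (congrFun ht 1).symm
    have hcross : a' * C = A * c' := by
      have : ((a' * C : ℤ) : ℚ) = ((A * c' : ℤ) : ℚ) := by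
        push_cast
        rw [ht0, ht1]; ring
      exact_mod_cast this
    have hc'C : c' ∣ C := by
      have : c' ∣ a' * C := ⟨A, by linarith⟩
      exact (IsCoprime.symm hco').dvd_of_dvd_mul_left this
    exact hdvd'.trans hc'C
  by_cases hva : (v : ℤ) ∣ a
  · obtain ⟨a₁, ha₁⟩ := hva
    have hco₁ : IsCoprime a₁ c := by rw [ha₁] at hco; exact hco.of_mul_left_right
    have hne2 : ![(a : ℚ), ((↑v * c : ℤ) : ℚ)] ≠ 0 := by
      intro hh
      have h0 : (a : ℚ) = 0 := by simpa using congrFun hh 0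
      have h1 : (((v : ℤ) * c : ℤ) : ℚ) = 0 := by simpa using congrFun hh 1
      rw [Int.cast_eq_zero] at h0
      rw [Int.cast_eq_zero, mul_eq_zero] at h1
      rcases h1 with h1 | h1
      · exact (by exact_mod_cast hv.ne_zero : (v:ℤ) ≠ 0) h1
      · subst h0 h1; exact not_isCoprime_zero_zero hco
    have hmk : Projectivization.mk ℚ ![(a : ℚ), ((↑v * c : ℤ) : ℚ)] hne2
        = Projectivization.mk ℚ ![(a₁ : ℚ), (c : ℚ)] (vec_ne_zero a₁ c hco₁) := by
      rw [Projectivization.mk_eq_mk_iff']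
      refine ⟨(v : ℚ), ?_⟩
      funext i
      fin_cases i <;> push_cast [ha₁] <;> simp
    have hNc : (N : ℤ) ∣ c := key a₁ c hco₁ (hmk.symm.trans heq)
    rw [hz]
    exact mem_orbit N a c hco hNc
  · have hprime : Prime (v : ℤ) := Nat.prime_iff_prime_int.mp hv
    have hcoav : IsCoprime a ((v : ℤ) * c) :=
      IsCoprime.mul_right ((hprime.coprime_iff_not_dvd.2 hva).symm) hco
    have hNvc : (N : ℤ) ∣ (v : ℤ) * c := by
      have := key a ((v:ℤ) * c) hcoav (by exact_mod_cast heq)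
      exact this
    have hcoNv : IsCoprime (N : ℤ) (v : ℤ) := by
      rw [Int.isCoprime_iff_gcd_eq_one]
      simpa [Int.gcd_natCast_natCast] using (Nat.coprime_comm.1 (hv.coprime_iff_not_dvd.2 hvN))
    have hNc : (N : ℤ) ∣ c := hcoNv.dvd_of_dvd_mul_left hNvc
    rw [hz]
    exact mem_orbit N a c hco hNc
end

section
/- Let N, m ≥ 1, c, d ∈ ℤ, p prime, and suppose [[a, b],[Nc, p^m d]] ∈ SL₂(ℤ). Let W = [[a p^m, b],[N p^m c, p^m d]]. If x ∈ ℙ¹(ℚ) satisfies W·x ∈ Γ₀(N)·∞, then x ∈ Γ₀(N)·∞; that is, the Atkin–Lehner matrix W preserves the set C = ℙ¹(ℚ) − Γ₀(N)·∞. -/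
open Matrix CongruenceSubgroup

lemma mulVec_ne (g : GL (Fin 2) ℚ) (v : Fin 2 → ℚ) (hv : v ≠ 0) :
    (g : Matrix (Fin 2) (Fin 2) ℚ) *ᵥ v ≠ 0 := by
  intro h0
  apply hv
  have := congrArg (fun w => ((g⁻¹ : GL (Fin 2) ℚ) : Matrix (Fin 2) (Fin 2) ℚ) *ᵥ w) h0
  simpa only [Matrix.mulVec_mulVec, Units.inv_mul, Matrix.one_mulVec, Matrix.mulVec_zero]
    using this

lemma glAct_mk_s4 (g : GL (Fin 2) ℚ) (v : Fin 2 → ℚ) (hv : v ≠ 0) :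
    glAct g (Projectivization.mk ℚ v hv) =
      Projectivization.mk ℚ ((g : Matrix (Fin 2) (Fin 2) ℚ) *ᵥ v) (mulVec_ne g v hv) :=
  rfl

lemma vec_ne_of_coprime (u v : ℤ) (h : IsCoprime u v) :
    (![(u : ℚ), (v : ℚ)] : Fin 2 → ℚ) ≠ 0 := by
  intro h0
  obtain ⟨z, w, hzw⟩ := h
  have hu : u = 0 := by exact_mod_cast (by simpa using congrFun h0 0 : (u:ℚ) = 0)
  have hv : v = 0 := by exact_mod_cast (by simpa using congrFun h0 1 : (v:ℚ) = 0)
  rw [hu, hv] at hzw; simp at hzw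

lemma coprime_col (γ : SL2Z) : IsCoprime (γ 0 0) (γ 1 0) := by
  have hd : (γ : Matrix (Fin 2) (Fin 2) ℤ).det = 1 := γ.2
  rw [Matrix.det_fin_two] at hd
  exact ⟨γ 1 1, -(γ 0 1), by linear_combination hd⟩

lemma slAct_inf (γ : SL2Z) :
    slAct γ inf = Projectivization.mk ℚ ![((γ 0 0 : ℤ) : ℚ), ((γ 1 0 : ℤ) : ℚ)]
      (vec_ne_of_coprime _ _ (coprime_col γ)) := by
  rw [slAct, inf, glAct_mk_s4]
  rw [Projectivization.mk_eq_mk_iff]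
  refine ⟨1, ?_⟩
  funext i
  fin_cases i <;>
    simp [Matrix.mulVec, dotProduct, Fin.sum_univ_two,
      Matrix.SpecialLinearGroup.toGL, Matrix.SpecialLinearGroup.map] <;> rfl

/-- proportionality with integral factor -/
lemma prop_int (A C u v : ℤ) (huv : IsCoprime u v)
    (hne : (![(A : ℚ), (C : ℚ)] : Fin 2 → ℚ) ≠ 0)
    (hmk : Projectivization.mk ℚ ![(A : ℚ), (C : ℚ)] hne =
      Projectivization.mk ℚ ![(u : ℚ), (v : ℚ)] (vec_ne_of_coprime u v huv)) :
    ∃ t : ℤ, A = t * u ∧ C = t * v := by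
  rw [Projectivization.mk_eq_mk_iff'] at hmk
  obtain ⟨s, hs⟩ := hmk
  have h0 : s * u = A := by simpa using congrFun hs 0
  have h1 : s * v = C := by simpa using congrFun hs 1
  obtain ⟨z, w, hzw⟩ := huv
  have hz : (z : ℚ) * u + (w : ℚ) * v = 1 := by exact_mod_cast congrArg (Int.cast : ℤ → ℚ) hzw
  have hts : ((z * A + w * C : ℤ) : ℚ) = s := by
    push_cast
    linear_combination (-(z : ℚ)) * h0 - (w : ℚ) * h1 + s * hz
  refine ⟨z * A + w * C, ?_, ?_⟩
  · exact_mod_cast (by rw [hts]; linarith [h0] : (A : ℚ) = ((z * A + w * C : ℤ) : ℚ) * u)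
  · exact_mod_cast (by rw [hts]; linarith [h1] : (C : ℚ) = ((z * A + w * C : ℤ) : ℚ) * v)

lemma exists_rep_s4 (x : P1) : ∃ (u v : ℤ) (huv : IsCoprime u v),
    x = Projectivization.mk ℚ ![(u : ℚ), (v : ℚ)] (vec_ne_of_coprime u v huv) := by
  induction x using Projectivization.ind with
  | h w hw =>
  set q0 := w 0 with hq0
  set q1 := w 1 with hq1
  set u0 : ℤ := q0.num * q1.den with hu0
  set v0 : ℤ := q1.num * q0.den with hv0
  have hne00 : ¬(u0 = 0 ∧ v0 = 0) := by
    rintro ⟨h1, h2⟩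
    apply hw
    have e0 : q0.num = 0 := by
      rcases mul_eq_zero.1 h1 with h | h
      · exact h
      · exact absurd h (by exact_mod_cast q1.den_nz)
    have e1 : q1.num = 0 := by
      rcases mul_eq_zero.1 h2 with h | h
      · exact h
      · exact absurd h (by exact_mod_cast q0.den_nz)
    funext i
    fin_cases i
    · simpa [← hq0] using Rat.zero_iff_num_zero.mpr e0
    · simpa [← hq1] using Rat.zero_iff_num_zero.mpr e1
  set g : ℕ := Int.gcd u0 v0 with hg
  have hgpos : 0 < g := by
    rcases Nat.eq_zero_or_pos g with h | h
    · exact absurd (Int.gcd_eq_zero_iff.mp h) hne00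
    · exact h
  set u : ℤ := u0 / g with hu
  set v : ℤ := v0 / g with hv
  have hdu : (g : ℤ) ∣ u0 := Int.gcd_dvd_left u0 v0
  have hdv : (g : ℤ) ∣ v0 := Int.gcd_dvd_right u0 v0
  have huv : IsCoprime u v := by
    rw [Int.isCoprime_iff_gcd_eq_one]
    exact Int.gcd_div_gcd_div_gcd hgpos
  refine ⟨u, v, huv, ?_⟩
  rw [Projectivization.mk_eq_mk_iff']
  refine ⟨(g : ℚ) / ((q0.den : ℚ) * q1.den), ?_⟩
  have hgq : (g : ℚ) ≠ 0 := by exact_mod_cast hgpos.ne'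
  have hd0 : (q0.den : ℚ) ≠ 0 := by exact_mod_cast q0.den_nz
  have hd1 : (q1.den : ℚ) ≠ 0 := by exact_mod_cast q1.den_nz
  have hgu : (g : ℚ) * (u : ℚ) = (u0 : ℚ) := by
    exact_mod_cast congrArg (Int.cast : ℤ → ℚ) (Int.mul_ediv_cancel' hdu)
  have hgv : (g : ℚ) * (v : ℚ) = (v0 : ℚ) := by
    exact_mod_cast congrArg (Int.cast : ℤ → ℚ) (Int.mul_ediv_cancel' hdv)
  have hu0' : ((u0 : ℤ) : ℚ) = q0 * q0.den * q1.den := by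
    rw [hu0]; push_cast; rw [Rat.mul_den_eq_num]
  have hv0' : ((v0 : ℤ) : ℚ) = q1 * q0.den * q1.den := by
    rw [hv0]; push_cast; rw [mul_comm ((q1.num : ℚ)) _]
    rw [← Rat.mul_den_eq_num q1]; ring
  funext i
  fin_cases i <;> simp only [Pi.smul_apply, Matrix.cons_val_zero, Matrix.cons_val_one,
    Matrix.head_cons, smul_eq_mul]
  · show (g : ℚ) / ((q0.den : ℚ) * q1.den) * (u : ℚ) = q0
    field_simp
    linear_combination (by rw [hgu, hu0'] : ((g:ℚ)) * (u:ℚ) = q0 * q0.den * q1.den)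
  · show (g : ℚ) / ((q0.den : ℚ) * q1.den) * (v : ℚ) = q1
    field_simp
    linear_combination (by rw [hgv, hv0'] : ((g:ℚ)) * (v:ℚ) = q1 * q0.den * q1.den)


/-- the Atkin–Lehner matrix W = [[a p^m, b],[N p^m c, p^m d]], built from
[[a,b],[Nc,p^m d]] ∈ SL₂(ℤ), preserves C = ℙ¹(ℚ) − Γ₀(N)·∞. -/
theorem stmt4 (N m : ℕ) (hN : 1 ≤ N) (hm : 1 ≤ m) (p : ℕ) (hp : p.Prime)
    (a b c d : ℤ)
    (hdet : (!![a, b; (N : ℤ) * c, (p : ℤ) ^ m * d]).det = 1) (x : P1)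
    (h : glAct (Matrix.GeneralLinearGroup.mkOfDetNeZero
        !![(a : ℚ) * (p : ℚ) ^ m, (b : ℚ); (N : ℚ) * (p : ℚ) ^ m * (c : ℚ), (p : ℚ) ^ m * (d : ℚ)]
        (by
          rw [Matrix.det_fin_two_of] at hdet ⊢
          have hp0 : ((p : ℚ)) ^ m ≠ 0 :=
            pow_ne_zero _ ((Nat.cast_ne_zero (R := ℚ)).mpr hp.ne_zero)
          have key : (a : ℚ) * (p : ℚ) ^ m * ((p : ℚ) ^ m * (d : ℚ))
              - (b : ℚ) * ((N : ℚ) * (p : ℚ) ^ m * (c : ℚ)) = (p : ℚ) ^ m := by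
            have hd : ((a * ((p : ℤ) ^ m * d) - b * ((N : ℤ) * c) : ℤ) : ℚ) = 1 := by
              exact_mod_cast hdet
            push_cast at hd
            linear_combination (p : ℚ) ^ m * hd
          rw [key]
          exact hp0)) x ∈ orbitInf N) :
    x ∈ orbitInf N := by
  have hdet' : a * ((p : ℤ) ^ m * d) - b * ((N : ℤ) * c) = 1 := by
    rw [Matrix.det_fin_two_of] at hdet; exact hdet
  obtain ⟨u, v, huv, rfl⟩ := exists_rep_s4 x
  rw [glAct_mk_s4] at h
  obtain ⟨γ, hγ, heq⟩ := h
  set W := Matrix.GeneralLinearGroup.mkOfDetNeZero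
      !![(a : ℚ) * (p : ℚ) ^ m, (b : ℚ); (N : ℚ) * (p : ℚ) ^ m * (c : ℚ), (p : ℚ) ^ m * (d : ℚ)]
      (by
          rw [Matrix.det_fin_two_of] at hdet ⊢
          have hp0 : ((p : ℚ)) ^ m ≠ 0 :=
            pow_ne_zero _ ((Nat.cast_ne_zero (R := ℚ)).mpr hp.ne_zero)
          have key : (a : ℚ) * (p : ℚ) ^ m * ((p : ℚ) ^ m * (d : ℚ))
              - (b : ℚ) * ((N : ℚ) * (p : ℚ) ^ m * (c : ℚ)) = (p : ℚ) ^ m := by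
            have hd : ((a * ((p : ℤ) ^ m * d) - b * ((N : ℤ) * c) : ℤ) : ℚ) = 1 := by
              exact_mod_cast hdet
            push_cast at hd
            linear_combination (p : ℚ) ^ m * hd
          rw [key]
          exact hp0) with hW
  set A : ℤ := a * (p : ℤ) ^ m * u + b * v with hA
  set C : ℤ := (N : ℤ) * (p : ℤ) ^ m * c * u + (p : ℤ) ^ m * d * v with hC
  have hvec : (W : Matrix (Fin 2) (Fin 2) ℚ) *ᵥ ![(u : ℚ), (v : ℚ)] = ![(A : ℚ), (C : ℚ)] := by
    funext i
    fin_cases i <;>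
      · show _ = _
        simp [hW, Matrix.GeneralLinearGroup.mkOfDetNeZero, Matrix.GeneralLinearGroup.mk',
          Matrix.unitOfDetInvertible, Matrix.mulVec, dotProduct, Fin.sum_univ_two,
          hA, hC]
        try (push_cast; ring)
  have hne' : (![(A : ℚ), (C : ℚ)] : Fin 2 → ℚ) ≠ 0 :=
    hvec ▸ mulVec_ne W _ (vec_ne_of_coprime u v huv)
  have h2 : Projectivization.mk ℚ ![(A : ℚ), (C : ℚ)] hne' =
      Projectivization.mk ℚ ![((γ 0 0 : ℤ) : ℚ), ((γ 1 0 : ℤ) : ℚ)]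
        (vec_ne_of_coprime _ _ (coprime_col γ)) := by
    rw [← slAct_inf γ, heq, Projectivization.mk_eq_mk_iff]
    exact ⟨1, by simp [hvec]⟩
  obtain ⟨t, htA, htC⟩ := prop_int A C (γ 0 0) (γ 1 0) (coprime_col γ) hne' h2
  have hNγ : (N : ℤ) ∣ γ 1 0 :=
    (ZMod.intCast_zmod_eq_zero_iff_dvd _ N).mp hγ
  have hNC : (N : ℤ) ∣ C := htC ▸ Dvd.dvd.mul_left hNγ t
  have hNdv : (N : ℤ) ∣ (p : ℤ) ^ m * d * v := by
    have hrw : (p : ℤ) ^ m * d * v = C - (N : ℤ) * ((p : ℤ) ^ m * c * u) := by rw [hC]; ring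
    rw [hrw]
    exact dvd_sub hNC (Dvd.intro _ rfl)
  have hcop : IsCoprime ((N : ℤ)) ((p : ℤ) ^ m * d) :=
    ⟨-(b * c), a, by linear_combination hdet'⟩
  have hNv : (N : ℤ) ∣ v := hcop.dvd_of_dvd_mul_left hNdv
  obtain ⟨z, w, hzw⟩ := huv
  have hdet2 : (!![u, -w; v, z] : Matrix (Fin 2) (Fin 2) ℤ).det = 1 := by
    rw [Matrix.det_fin_two_of]; linarith
  set γ' : SL2Z := ⟨!![u, -w; v, z], hdet2⟩ with hγ'
  refine ⟨γ', ?_, ?_⟩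
  · rw [Gamma0_mem]
    have he : (γ' 1 0 : ℤ) = v := by simp [hγ']
    rw [he]
    exact (ZMod.intCast_zmod_eq_zero_iff_dvd _ N).mpr hNv
  · rw [slAct_inf γ', Projectivization.mk_eq_mk_iff]
    refine ⟨1, ?_⟩
    funext i
    fin_cases i <;> simp [hγ']
end

section
/- Let p be an odd prime, s = (p+1)t an even integer, n_k = pks, and λ as above (λ(0)=0, increments ⌊(n−1)/s⌋ − ⌊(n−1)/(ps)⌋). The segment of the polygon {(n, λ(n))} containing the point (n_k, λ(n_k)) in its interior has slope (p−1)k, and its endpoints have x-coordinates n_k − s and n_k + s. -/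
/-- λ(0) = 0 and λ(n) = λ(n−1) + ⌊(n−1)/s⌋ − ⌊(n−1)/(ps)⌋. -/
def lam (p s : ℕ) : ℕ → ℕ
  | 0 => 0
  | n + 1 => lam p s n + (n / s - n / (p * s))

/-- with s = (p+1)t and n_k = pks, the segment of the polygon {(n, λ(n))}
containing (n_k, λ(n_k)) in its interior has slope (p−1)k and endpoints with x-coordinates
n_k − s and n_k + s: the increments equal (p−1)k exactly on (n_k − s, n_k + s], the increment
at n_k − s is (p−1)k − 1, and the increment at n_k + s + 1 is (p−1)k + 1. -/
theorem stmt16 (p t k : ℕ) (hp : p.Prime) (hodd : Odd p) (ht : 1 ≤ t) (hk : 1 ≤ k) :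
    (∀ n : ℕ, p * k * ((p + 1) * t) - (p + 1) * t < n → n ≤ p * k * ((p + 1) * t) + (p + 1) * t →
      lam p ((p + 1) * t) n = lam p ((p + 1) * t) (n - 1) + (p - 1) * k) ∧
    lam p ((p + 1) * t) (p * k * ((p + 1) * t) - (p + 1) * t)
      = lam p ((p + 1) * t) (p * k * ((p + 1) * t) - (p + 1) * t - 1) + ((p - 1) * k - 1) ∧
    lam p ((p + 1) * t) (p * k * ((p + 1) * t) + (p + 1) * t + 1)
      = lam p ((p + 1) * t) (p * k * ((p + 1) * t) + (p + 1) * t) + ((p - 1) * k + 1) := by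
  have hp2 : 2 ≤ p := hp.two_le
  set s : ℕ := (p + 1) * t with hsdef
  have hs : 1 ≤ s := Nat.mul_pos (by omega) ht
  have incr : ∀ m : ℕ, lam p s (m + 1) = lam p s m + (m / s - m / (p * s)) := fun m => rfl
  -- basic product inequalities (as atoms for omega)
  have e1 : k * (p * s) = p * k * s := by ring
  have hss : s ≤ p * s := by nlinarith
  have hps : p * s ≤ p * k * s := by nlinarith
  have h2s : 2 * s ≤ p * k * s := by nlinarith
  have hsps : s + s ≤ p * s := by nlinarith
  have hkpk : k ≤ p * k := by nlinarith
  have hpk2 : 2 ≤ p * k := by nlinarith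
  have hpk : (p - 1) * k = p * k - k := Nat.sub_one_mul p k
  -- division computations
  have d1 : ∀ m, p * k * s - s ≤ m → m < p * k * s → m / s = p * k - 1 := by
    intro m h1 h2
    apply Nat.div_eq_of_lt_le
    · rw [Nat.sub_one_mul]; omega
    · have h : (p * k - 1 + 1) * s = p * k * s := by rw [Nat.sub_add_cancel (by omega)]
      omega
  have d2 : ∀ m, p * k * s ≤ m → m < p * k * s + s → m / s = p * k := by
    intro m h1 h2
    apply Nat.div_eq_of_lt_le
    · omega
    · have h : (p * k + 1) * s = p * k * s + s := by ring
      omega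
  have d3 : ∀ m, p * k * s - p * s ≤ m → m < p * k * s → m / (p * s) = k - 1 := by
    intro m h1 h2
    apply Nat.div_eq_of_lt_le
    · rw [Nat.sub_one_mul, e1]; omega
    · have h : (k - 1 + 1) * (p * s) = p * k * s := by
        rw [Nat.sub_add_cancel (by omega), e1]
      omega
  have d4 : ∀ m, p * k * s ≤ m → m < p * k * s + p * s → m / (p * s) = k := by
    intro m h1 h2
    apply Nat.div_eq_of_lt_le
    · omega
    · have h : (k + 1) * (p * s) = p * k * s + p * s := by rw [add_mul, e1, one_mul]
      omega
  have d5 : ∀ m, p * k * s - 2 * s ≤ m → m < p * k * s - s → m / s = p * k - 2 := by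
    intro m h1 h2
    apply Nat.div_eq_of_lt_le
    · have h : (p * k - 2) * s = p * k * s - 2 * s := by
        rw [Nat.sub_mul]
      omega
    · have h : (p * k - 2 + 1) * s = p * k * s - s := by
        have : p * k - 2 + 1 = p * k - 1 := by omega
        rw [this, Nat.sub_one_mul]
      omega
  have d6 : (p * k * s + s) / s = p * k + 1 := by
    apply Nat.div_eq_of_lt_le
    · have h : (p * k + 1) * s = p * k * s + s := by ring
      omega
    · have h : (p * k + 1 + 1) * s = p * k * s + s + s := by ring
      omega
  refine ⟨?_, ?_, ?_⟩
  · intro n h1 h2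
    obtain ⟨m, rfl⟩ : ∃ m, n = m + 1 := ⟨n - 1, by omega⟩
    rw [incr m]
    simp only [Nat.add_sub_cancel]
    congr 1
    rcases lt_or_ge m (p * k * s) with h | h
    · rw [d1 m (by omega) h, d3 m (by omega) h]; omega
    · rw [d2 m h (by omega), d4 m h (by omega)]; omega
  · obtain ⟨m, hm⟩ : ∃ m, p * k * s - s = m + 1 := ⟨p * k * s - s - 1, by omega⟩
    rw [hm, incr m]
    have hm' : m = p * k * s - s - 1 := by omega
    congr 1
    rw [d5 m (by omega) (by omega), d3 m (by omega) (by omega)]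
    omega
  · rw [show p * k * s + s + 1 = (p * k * s + s) + 1 from rfl, incr (p * k * s + s)]
    congr 1
    rw [d6, d4 (p * k * s + s) (by omega) (by omega)]
    omega
end
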